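/- Let D be a GCD domain with fraction field K and let A ∈ D^{n×n} admit a permutation-free LD⁻¹U decomposition A = L · D_g^{−1} · U with pivots p_1, …, p_n. Then d_1* divides the (1,1) entry p_1 of D_g, and for every k with 2 ≤ k ≤ n the product d_{k−1}* · d_k* of consecutive determinantal divisors of A divides the (k,k) entry p_{k−1}p_k of D_g. -/

import Mathlib

/-- The diagonal matrix `D_g = diag(p₁, p₁p₂, p₂p₃, …, p_{n−1}p_n)` built from the
pivots `p : Fin n → D`. -/
def bareissDiag {D : Type*} [CommRing D] {n : ℕ} (p : Fin n → D) :
    Matrix (Fin n) (Fin n) D :=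
  Matrix.diagonal fun i =>
    (if (i : ℕ) = 0 then 1
      else p ⟨(i : ℕ) - 1, lt_of_le_of_lt (Nat.sub_le _ _) i.isLt⟩) * p i


open Matrix Finset in
private lemma submatrix_mul_of_lower {R : Type*} [CommRing R] {n m : ℕ} (h : m ≤ n)
    (X Y : Matrix (Fin n) (Fin n) R) (hX : ∀ i j : Fin n, (i:ℕ) < (j:ℕ) → X i j = 0) :
    (X * Y).submatrix (Fin.castLE h) (Fin.castLE h) =
      X.submatrix (Fin.castLE h) (Fin.castLE h) * Y.submatrix (Fin.castLE h) (Fin.castLE h) := by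
  ext i c
  simp only [Matrix.submatrix_apply, Matrix.mul_apply]
  set f : ℕ → R := fun t => if ht : t < n then
      X (Fin.castLE h i) ⟨t, ht⟩ * Y ⟨t, ht⟩ (Fin.castLE h c) else 0 with hf
  have e1 : ∑ j : Fin n, X (Fin.castLE h i) j * Y j (Fin.castLE h c)
      = ∑ t ∈ Finset.range n, f t := by
    rw [← Fin.sum_univ_eq_sum_range]
    exact Finset.sum_congr rfl fun j _ => by simp [hf, j.isLt]
  have e2 : ∑ j : Fin m, X (Fin.castLE h i) (Fin.castLE h j) * Y (Fin.castLE h j) (Fin.castLE h c)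
      = ∑ t ∈ Finset.range m, f t := by
    rw [← Fin.sum_univ_eq_sum_range]
    refine Finset.sum_congr rfl fun j _ => ?_
    have hjn : (j : ℕ) < n := lt_of_lt_of_le j.isLt h
    simp only [hf, hjn, dif_pos]
    rfl
  rw [e1, e2]
  symm
  apply Finset.sum_subset (Finset.range_subset_range.mpr h)
  intro t htn htm
  simp only [Finset.mem_range, not_lt] at htm
  simp only [Finset.mem_range] at htn
  have : X (Fin.castLE h i) ⟨t, htn⟩ = 0 :=
    hX _ _ (by simpa using lt_of_lt_of_le i.isLt htm)
  simp [hf, htn, this]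

open Matrix Finset in
private lemma submatrix_mul_of_upper {R : Type*} [CommRing R] {n m : ℕ} (h : m ≤ n)
    (Y Z : Matrix (Fin n) (Fin n) R) (hZ : ∀ i j : Fin n, (j:ℕ) < (i:ℕ) → Z i j = 0) :
    (Y * Z).submatrix (Fin.castLE h) (Fin.castLE h) =
      Y.submatrix (Fin.castLE h) (Fin.castLE h) * Z.submatrix (Fin.castLE h) (Fin.castLE h) := by
  have h1 := submatrix_mul_of_lower h Zᵀ Yᵀ (fun i j hij => hZ j i hij)
  have h2 := congrArg Matrix.transpose h1
  simpa [Matrix.transpose_submatrix, Matrix.transpose_mul, ← mul_assoc] using h2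

open Matrix Finset in
private lemma leading_minor_eq {D K : Type*} [CommRing D] [IsDomain D] [Field K]
    [Algebra D K] [IsFractionRing D K] {n : ℕ} (A L U : Matrix (Fin n) (Fin n) D)
    (hL : ∀ i j : Fin n, (i : ℕ) < (j : ℕ) → L i j = 0)
    (hU : ∀ i j : Fin n, (j : ℕ) < (i : ℕ) → U i j = 0)
    (hdiag : ∀ i : Fin n, U i i = L i i)
    (hp : ∀ i : Fin n, L i i ≠ 0)
    (hA : A.map (algebraMap D K) =
      L.map (algebraMap D K) *
        ((Matrix.diagonal fun i : Fin n =>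
          (if (i : ℕ) = 0 then 1
            else L ⟨(i : ℕ) - 1, lt_of_le_of_lt (Nat.sub_le _ _) i.isLt⟩
              ⟨(i : ℕ) - 1, lt_of_le_of_lt (Nat.sub_le _ _) i.isLt⟩) * L i i).map
          (algebraMap D K))⁻¹ *
        U.map (algebraMap D K))
    (k : Fin n) :
    (A.submatrix (Fin.castLE k.isLt) (Fin.castLE k.isLt)).det = L k k := by
  classical
  have hinj : Function.Injective (algebraMap D K) := IsFractionRing.injective D K
  set φ := algebraMap D K with hφ
  apply hinj
  have hm : (k : ℕ) + 1 ≤ n := k.isLt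
  -- the entrywise nonzero pivots in K
  set f : ℕ → K := fun t => if ht : t < n then φ (L ⟨t, ht⟩ ⟨t, ht⟩) else 1 with hf
  have hfne : ∀ t, f t ≠ 0 := by
    intro t
    by_cases ht : t < n
    · simp only [hf, ht, dif_pos]
      exact fun hc => hp _ (hinj (by simpa using hc))
    · simp [hf, ht]
  -- move φ inside the determinant
  rw [RingHom.map_det, RingHom.mapMatrix_apply, ← Matrix.submatrix_map, hA]
  -- diagonal matrix over K
  set w : Fin n → D := fun i =>
    (if (i : ℕ) = 0 then 1
      else L ⟨(i : ℕ) - 1, lt_of_le_of_lt (Nat.sub_le _ _) i.isLt⟩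
        ⟨(i : ℕ) - 1, lt_of_le_of_lt (Nat.sub_le _ _) i.isLt⟩) * L i i with hw
  have hDg : ((Matrix.diagonal w).map φ) = Matrix.diagonal fun i => φ (w i) := by
    rw [Matrix.diagonal_map (map_zero φ)]
  have hwne : ∀ i : Fin n, φ (w i) ≠ 0 := by
    intro i hc
    have hwz : w i = 0 := hinj (by simpa using hc)
    rw [hw] at hwz
    rcases mul_eq_zero.mp hwz with h | h
    · by_cases hi0 : (i : ℕ) = 0
      · simp [hi0] at h
      · rw [if_neg hi0] at h; exact hp _ h
    · exact hp _ h
  have hinvd : (Matrix.diagonal fun i => φ (w i))⁻¹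
      = Matrix.diagonal fun i => (φ (w i))⁻¹ := by
    apply Matrix.inv_eq_right_inv
    rw [Matrix.diagonal_mul_diagonal]
    have : (fun i => φ (w i) * (φ (w i))⁻¹) = fun _ : Fin n => (1 : K) := by
      funext i; exact mul_inv_cancel₀ (hwne i)
    rw [this, Matrix.diagonal_one]
  rw [hDg, hinvd]
  rw [submatrix_mul_of_upper hm _ _ (fun i j hij => by simp [Matrix.map_apply, hU i j hij]),
      submatrix_mul_of_lower hm _ _ (fun i j hij => by simp [Matrix.map_apply, hL i j hij])]
  rw [Matrix.submatrix_diagonal _ _ (Fin.strictMono_castLE hm).injective]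
  rw [Matrix.det_mul, Matrix.det_mul, Matrix.det_diagonal]
  rw [Matrix.det_of_lowerTriangular _ (fun i j hij => by
        have h1 : (i : Fin ((k:ℕ)+1)) < j := hij
        simp only [Matrix.submatrix_apply, Matrix.map_apply]
        rw [hL _ _ (show ((Fin.castLE hm i : Fin n) : ℕ) < (Fin.castLE hm j : Fin n) by
          simpa using h1), map_zero]),
      Matrix.det_of_upperTriangular (fun i j hij => by
        have h1 : (j : Fin ((k:ℕ)+1)) < i := hij
        simp only [Matrix.submatrix_apply, Matrix.map_apply]
        rw [hU _ _ (show ((Fin.castLE hm j : Fin n) : ℕ) < (Fin.castLE hm i : Fin n) by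
          simpa using h1), map_zero])]
  set g : ℕ → K := fun t => (if t = 0 then 1 else f (t - 1)) * f t with hg
  have eL : (∏ i : Fin ((k:ℕ)+1), (L.map φ).submatrix (Fin.castLE hm) (Fin.castLE hm) i i)
      = ∏ t ∈ Finset.range ((k:ℕ)+1), f t := by
    rw [← Fin.prod_univ_eq_prod_range]
    refine Finset.prod_congr rfl fun j _ => ?_
    have hjn : (j : ℕ) < n := lt_of_lt_of_le j.isLt hm
    simp only [Matrix.submatrix_apply, Matrix.map_apply, hf, hjn, dif_pos]
    rfl
  have eU : (∏ i : Fin ((k:ℕ)+1), (U.map φ).submatrix (Fin.castLE hm) (Fin.castLE hm) i i)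
      = ∏ t ∈ Finset.range ((k:ℕ)+1), f t := by
    rw [← Fin.prod_univ_eq_prod_range]
    refine Finset.prod_congr rfl fun j _ => ?_
    have hjn : (j : ℕ) < n := lt_of_lt_of_le j.isLt hm
    simp only [Matrix.submatrix_apply, Matrix.map_apply, hdiag, hf, hjn, dif_pos]
    rfl
  have eW : (∏ i : Fin ((k:ℕ)+1), ((fun i => (φ (w i))⁻¹) ∘ Fin.castLE hm) i)
      = (∏ t ∈ Finset.range ((k:ℕ)+1), g t)⁻¹ := by
    rw [← Finset.prod_inv_distrib, ← Fin.prod_univ_eq_prod_range]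
    refine Finset.prod_congr rfl fun j _ => ?_
    have hjn : (j : ℕ) < n := lt_of_lt_of_le j.isLt hm
    have hcast : (Fin.castLE hm j : Fin n) = ⟨(j : ℕ), hjn⟩ := rfl
    simp only [Function.comp_apply, hcast]
    congr 1
    by_cases hj0 : (j : ℕ) = 0
    · have h0n : 0 < n := hj0 ▸ hjn
      simp [hw, hg, hj0, hf, hjn, h0n]
    · have hj1 : (j : ℕ) - 1 < n := lt_of_le_of_lt (Nat.sub_le _ _) hjn
      simp [hw, hg, hj0, hf, hjn, hj1]
  rw [eL, eU, eW]
  have hkn : (k : ℕ) < n := k.isLt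
  have hfk : φ (L k k) = f (k : ℕ) := by simp [hf, hkn]
  set P : K := ∏ t ∈ Finset.range (k : ℕ), f t with hP
  have hPne : P ≠ 0 := Finset.prod_ne_zero_iff.mpr fun t _ => hfne t
  have h1 : (∏ t ∈ Finset.range ((k:ℕ)+1), f t) = P * f (k : ℕ) :=
    Finset.prod_range_succ _ _
  have h2 : (∏ t ∈ Finset.range ((k:ℕ)+1), g t) = P * (P * f (k : ℕ)) := by
    rw [Finset.prod_range_succ']
    have hg0 : g 0 = f 0 := by simp [hg]
    have hgs : ∀ t, g (t + 1) = f t * f (t + 1) := by intro t; simp [hg]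
    calc (∏ t ∈ Finset.range (k : ℕ), g (t + 1)) * g 0
        = (∏ t ∈ Finset.range (k : ℕ), f t * f (t + 1)) * f 0 := by
          rw [hg0, Finset.prod_congr rfl fun t _ => hgs t]
      _ = ((∏ t ∈ Finset.range (k : ℕ), f t) * ∏ t ∈ Finset.range (k : ℕ), f (t + 1)) * f 0 := by
          rw [Finset.prod_mul_distrib]
      _ = P * ((∏ t ∈ Finset.range (k : ℕ), f (t + 1)) * f 0) := by rw [hP]; ring
      _ = P * (∏ t ∈ Finset.range ((k:ℕ)+1), f t) := by rw [Finset.prod_range_succ']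
      _ = P * (P * f (k : ℕ)) := by rw [h1]
  rw [h1, h2, hfk]
  have hfkne : f (k : ℕ) ≠ 0 := hfne _
  field_simp

/-- (Corollary 8 of the paper.)  Let `A = L · D_g⁻¹ · U` be a
permutation-free `L D⁻¹ U` decomposition over a GCD domain, and for each `k` let
`d k` be a gcd of all `(k+1) × (k+1)` minors of `A` (the determinantal divisors,
0-indexed).  Then `d 0` divides the `(0,0)` entry `p 0` of `D_g`, and for `k ≥ 1`
the product `d (k-1) * d k` divides the `(k,k)` entry `p (k-1) * p k` of `D_g`. -/
theorem stmt5 {D K : Type*} [CommRing D] [IsDomain D] [GCDMonoid D] [Field K]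
    [Algebra D K] [IsFractionRing D K] {n : ℕ} (A L U : Matrix (Fin n) (Fin n) D)
    (hL : ∀ i j : Fin n, (i : ℕ) < (j : ℕ) → L i j = 0)
    (hU : ∀ i j : Fin n, (j : ℕ) < (i : ℕ) → U i j = 0)
    (hdiag : ∀ i : Fin n, U i i = L i i)
    (hp : ∀ i : Fin n, L i i ≠ 0)
    (hA : A.map (algebraMap D K) =
      L.map (algebraMap D K) *
        ((bareissDiag fun i : Fin n => L i i).map (algebraMap D K))⁻¹ *
        U.map (algebraMap D K))
    (d : Fin n → D)
    (hd1 : ∀ (k : Fin n) (I J : Fin ((k : ℕ) + 1) → Fin n), StrictMono I →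
      StrictMono J → d k ∣ (A.submatrix I J).det)
    (hd2 : ∀ (k : Fin n) (c : D), (∀ I J : Fin ((k : ℕ) + 1) → Fin n, StrictMono I →
      StrictMono J → c ∣ (A.submatrix I J).det) → c ∣ d k) :
    (∀ h0 : 0 < n, d ⟨0, h0⟩ ∣ L ⟨0, h0⟩ ⟨0, h0⟩) ∧
    (∀ k : Fin n, 0 < (k : ℕ) →
      d ⟨(k : ℕ) - 1, lt_of_le_of_lt (Nat.sub_le _ _) k.isLt⟩ * d k ∣
        L ⟨(k : ℕ) - 1, lt_of_le_of_lt (Nat.sub_le _ _) k.isLt⟩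
            ⟨(k : ℕ) - 1, lt_of_le_of_lt (Nat.sub_le _ _) k.isLt⟩ * L k k) := by
  have key : ∀ k : Fin n, d k ∣ L k k := by
    intro k
    have hdet := leading_minor_eq A L U hL hU hdiag hp
      (by unfold bareissDiag at hA; exact hA) k
    rw [← hdet]
    exact hd1 k _ _ (Fin.strictMono_castLE k.isLt) (Fin.strictMono_castLE k.isLt)
  exact ⟨fun h0 => key ⟨0, h0⟩, fun k hk => mul_dvd_mul (key _) (key k)⟩
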